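/- Let r_i := 2^{-i-2} for i ≥ 1 and let (x_i) be points of the flat 2-torus T = ℝ²/ℤ² (with geodesic distance d) such that for each k ≥ 2, x_k maximises the distance to ⋃_{i=1}^{k-1} B(x_i, r_i). Then for every k ≥ 2, dist(x_k, ⋃_{i=1}^{k-1} B(x_i,r_i)) ≥ 2 r_k. Key step: the intervals [d(x₁,x_i) − r_i, d(x₁,x_i) + r_i] for i = 1,…,k−1 cover total length at most Σ_{i=1}^{k-1} 2^{-i-1} < 1/2 of [0,1], hence the complement in [0,1] contains an interval of length at least 1/(2k) ≥ 2^{-k} = 4r_k, and there exists a point y ∈ T with d(x₁,y) equal to the midpoint of that interval, satisfying dist(y, ⋃_{i=1}^{k-1} B(x_i,r_i)) ≥ 2r_k. -/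

import Mathlib

open Real MeasureTheory

/-- The flat 2-torus `ℝ²/ℤ²`. -/
abbrev Torus := AddCircle (1 : ℝ) × AddCircle (1 : ℝ)

/-- The geodesic (flat Euclidean) distance on the torus. -/
noncomputable def torusDist (p q : Torus) : ℝ :=
  Real.sqrt (dist p.1 q.1 ^ 2 + dist p.2 q.2 ^ 2)

/-- Distance from a point to a set with respect to the geodesic torus distance. -/
noncomputable def torusSetDist (y : Torus) (A : Set Torus) : ℝ :=
  sInf (torusDist y '' A)

/-- Open ball in the torus for the geodesic distance. -/
def torusBall (z : Torus) (ρ : ℝ) : Set Torus := {w : Torus | torusDist z w < ρ}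

lemma torusDist_nonneg (p q : Torus) : 0 ≤ torusDist p q := Real.sqrt_nonneg _

lemma fst_dist_le_torusDist (p q : Torus) : dist p.1 q.1 ≤ torusDist p q := by
  have h : dist p.1 q.1 = Real.sqrt (dist p.1 q.1 ^ 2) := by
    rw [Real.sqrt_sq dist_nonneg]
  rw [h]
  apply Real.sqrt_le_sqrt
  nlinarith [sq_nonneg (dist p.2 q.2)]

lemma torusDist_self (p : Torus) : torusDist p p = 0 := by
  simp [torusDist]

lemma geo_sum (n : ℕ) :
    ∑ i ∈ Finset.Icc 1 n, (2:ℝ) ^ (-(i:ℤ) - 1) = 1/2 - (2:ℝ) ^ (-(n:ℤ) - 1) := by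
  induction n with
  | zero => norm_num
  | succ n ih =>
    rw [Finset.sum_Icc_succ_top (by omega : 1 ≤ n + 1), ih]
    have h : ∀ m : ℤ, (2:ℝ) ^ (m - 1) = 2 * (2:ℝ) ^ (m - 2) := by
      intro m
      rw [show m - 1 = 1 + (m - 2) by ring, zpow_add₀ (two_ne_zero)]
      norm_num
    push_cast
    rw [show -((n:ℤ) + 1) - 1 = -(n:ℤ) - 2 by ring, h (-(n:ℤ))]
    ring

theorem torus_separation
    (x : ℕ → Torus) (r : ℕ → ℝ) (hr : ∀ i, r i = (2 : ℝ) ^ (-(i : ℤ) - 2))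
    (hmax : ∀ k : ℕ, 2 ≤ k → ∀ y : Torus,
      torusSetDist y (⋃ i ∈ Finset.Icc 1 (k - 1), torusBall (x i) (r i)) ≤
        torusSetDist (x k) (⋃ i ∈ Finset.Icc 1 (k - 1), torusBall (x i) (r i))) :
    ∀ k : ℕ, 2 ≤ k →
      2 * r k ≤ torusSetDist (x k) (⋃ i ∈ Finset.Icc 1 (k - 1), torusBall (x i) (r i)) := by
  intro k hk
  have hrpos : ∀ i, 0 < r i := fun i => by rw [hr]; positivity
  haveI : Fact ((0:ℝ) < 1) := ⟨one_pos⟩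
  set A : Set Torus := ⋃ i ∈ Finset.Icc 1 (k - 1), torusBall (x i) (r i) with hA
  set S : Set (AddCircle (1:ℝ)) :=
    ⋃ i ∈ Finset.Icc 1 (k - 1), Metric.closedBall (x i).1 (r i + 2 * r k) with hS
  -- the real sum bound
  have hsum : ∑ i ∈ Finset.Icc 1 (k - 1), (2 * r i + 4 * r k) < 1 := by
    have h1 : ∑ i ∈ Finset.Icc 1 (k - 1), (2 * r i + 4 * r k)
        = ∑ i ∈ Finset.Icc 1 (k - 1), 2 * r i + (k - 1 : ℕ) * (4 * r k) := by
      rw [Finset.sum_add_distrib, Finset.sum_const, Nat.card_Icc]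
      simp [nsmul_eq_mul]
    have h2 : ∑ i ∈ Finset.Icc 1 (k - 1), 2 * r i = 1/2 - (2:ℝ) ^ (-((k - 1 : ℕ) : ℤ) - 1) := by
      rw [← geo_sum (k - 1)]
      apply Finset.sum_congr rfl
      intro i _
      rw [hr i, show -(i:ℤ) - 1 = 1 + (-(i:ℤ) - 2) by ring, zpow_add₀ two_ne_zero]
      norm_num
    have hk1 : ((k - 1 : ℕ) : ℤ) = (k : ℤ) - 1 := by
      have : (1:ℕ) ≤ k := by omega
      push_cast [Nat.cast_sub this]; ring
    have hgeo : (2:ℝ) ^ (-((k - 1 : ℕ) : ℤ) - 1) = (2:ℝ) ^ (-(k:ℤ)) := by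
      rw [hk1]; ring_nf
    have hrk : 4 * r k = (2:ℝ) ^ (-(k:ℤ)) := by
      rw [hr k, show -(k:ℤ) = 2 + (-(k:ℤ) - 2) by ring, zpow_add₀ two_ne_zero]
      norm_num
    have hlt : ((k - 1 : ℕ) : ℝ) * (2:ℝ) ^ (-(k:ℤ)) < 1/2 := by
      have hnat : (k - 1 : ℕ) < 2 ^ (k - 1) := Nat.lt_two_pow_self
      have hcast : ((k - 1 : ℕ) : ℝ) < (2:ℝ) ^ ((k - 1 : ℕ)) := by
        exact_mod_cast hnat
      have hpow : (2:ℝ) ^ ((k - 1 : ℕ)) * (2:ℝ) ^ (-(k:ℤ)) = 1/2 := by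
        rw [← zpow_natCast (2:ℝ) (k - 1), hk1, ← zpow_add₀ (two_ne_zero (α := ℝ)),
          show (k:ℤ) - 1 + -(k:ℤ) = -1 by ring]
        norm_num
      have hp : (0:ℝ) < (2:ℝ) ^ (-(k:ℤ)) := by positivity
      calc ((k - 1 : ℕ) : ℝ) * (2:ℝ) ^ (-(k:ℤ))
          < (2:ℝ) ^ ((k - 1 : ℕ)) * (2:ℝ) ^ (-(k:ℤ)) := by
            exact mul_lt_mul_of_pos_right hcast hp
        _ = 1/2 := hpow
    have hp : (0:ℝ) < (2:ℝ) ^ (-(k:ℤ)) := by positivity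
    rw [h1, h2, hgeo, hrk]
    linarith
  -- measure bound: S is not everything
  have hmeas : volume S < volume (Set.univ : Set (AddCircle (1:ℝ))) := by
    rw [AddCircle.measure_univ]
    calc volume S ≤ ∑ i ∈ Finset.Icc 1 (k - 1),
            volume (Metric.closedBall (x i).1 (r i + 2 * r k)) :=
          measure_biUnion_finset_le _ _
      _ ≤ ∑ i ∈ Finset.Icc 1 (k - 1), ENNReal.ofReal (2 * r i + 4 * r k) := by
          apply Finset.sum_le_sum
          intro i _
          rw [AddCircle.volume_closedBall]
          apply ENNReal.ofReal_le_ofReal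
          calc min 1 (2 * (r i + 2 * r k)) ≤ 2 * (r i + 2 * r k) := min_le_right _ _
            _ = 2 * r i + 4 * r k := by ring
      _ = ENNReal.ofReal (∑ i ∈ Finset.Icc 1 (k - 1), (2 * r i + 4 * r k)) := by
          rw [← ENNReal.ofReal_sum_of_nonneg]
          intro i _
          have := (hrpos i).le
          have := (hrpos k).le
          linarith
      _ < ENNReal.ofReal 1 := by
          exact (ENNReal.ofReal_lt_ofReal_iff one_pos).mpr hsum
  obtain ⟨c, hc⟩ : ∃ c : AddCircle (1:ℝ), c ∉ S := by
    by_contra h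
    push_neg at h
    have : S = Set.univ := Set.eq_univ_of_forall h
    rw [this] at hmeas
    exact lt_irrefl _ hmeas
  have hcfar : ∀ i ∈ Finset.Icc 1 (k - 1), r i + 2 * r k < dist c (x i).1 := by
    intro i hi
    by_contra hle
    push_neg at hle
    exact hc (Set.mem_biUnion hi (Metric.mem_closedBall.mpr hle))
  set y : Torus := (c, 0) with hy
  -- every point of A is far from y
  have hkey : ∀ a ∈ A, 2 * r k ≤ torusDist y a := by
    intro a ha
    rw [hA, Set.mem_iUnion₂] at ha
    obtain ⟨i, hi, hai⟩ := ha
    have h1 : dist (x i).1 a.1 ≤ torusDist (x i) a := fst_dist_le_torusDist _ _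
    have h2 : dist y.1 a.1 ≤ torusDist y a := fst_dist_le_torusDist _ _
    have h3 : torusDist (x i) a < r i := hai
    have h4 : dist c (x i).1 ≤ dist c a.1 + dist a.1 (x i).1 := dist_triangle _ _ _
    have h5 : r i + 2 * r k < dist c (x i).1 := hcfar i hi
    have h6 : dist a.1 (x i).1 = dist (x i).1 a.1 := dist_comm _ _
    have h7 : dist y.1 a.1 = dist c a.1 := rfl
    linarith
  -- A is nonempty
  have h1mem : (1:ℕ) ∈ Finset.Icc 1 (k - 1) := by
    simp only [Finset.mem_Icc]; omega
  have hAne : (x 1) ∈ A := by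
    rw [hA]
    apply Set.mem_biUnion h1mem
    show torusDist (x 1) (x 1) < r 1
    rw [torusDist_self]; exact hrpos 1
  have hylb : 2 * r k ≤ torusSetDist y A := by
    apply le_csInf ⟨torusDist y (x 1), Set.mem_image_of_mem _ hAne⟩
    rintro b ⟨a, ha, rfl⟩
    exact hkey a ha
  exact le_trans hylb (hmax k hk y)
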